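/- Let 𝔮 be a prime ideal of an imaginary quadratic field K coprime to an integral ideal 𝔪, and let I, J be integral ideals coprime to 𝔪 with 𝔮 I = (α) J for some α ∈ K^×. Then there exist y_𝔮 ∈ 𝔮, y_I ∈ I, and t ∈ J such that y_𝔮 and y_I are units modulo 𝔪 and α = y_𝔮 y_I / t. -/

import Mathlib

open NumberField FractionalIdeal nonZeroDivisors

lemma exists_unit_elem {R : Type*} [CommRing R] [IsDomain R] {A 𝔪 : Ideal R}
    (hA : A ≠ ⊥) (h : IsCoprime A 𝔪) :
    ∃ y ∈ A, y ≠ 0 ∧ IsUnit (Ideal.Quotient.mk 𝔪 y) := by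
  rw [Ideal.isCoprime_iff_exists] at h
  obtain ⟨y, hy, m, hm, hym⟩ := h
  by_cases hy0 : y = 0
  · subst hy0
    rw [zero_add] at hym
    have h𝔪 : 𝔪 = ⊤ := Ideal.eq_top_iff_one 𝔪 |>.mpr (hym ▸ hm)
    obtain ⟨z, hz, hz0⟩ := Submodule.exists_mem_ne_zero_of_ne_bot hA
    refine ⟨z, hz, hz0, ?_⟩
    have : Subsingleton (R ⧸ 𝔪) := by
      rw [h𝔪]; exact Ideal.Quotient.subsingleton_iff.mpr rfl
    exact IsUnit.of_mul_eq_one 1 (Subsingleton.elim _ _)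
  · refine ⟨y, hy, hy0, ?_⟩
    have : Ideal.Quotient.mk 𝔪 y = 1 := by
      have : Ideal.Quotient.mk 𝔪 (y + m) = 1 := by rw [hym]; simp
      rwa [_root_.map_add, Ideal.Quotient.eq_zero_iff_mem.mpr hm, add_zero] at this
    rw [this]; exact isUnit_one

/-- Let `𝔮` be a prime ideal of an imaginary quadratic field `K` coprime to
an integral ideal `𝔪`, and let `I`, `J` be integral ideals coprime to `𝔪` with
`𝔮 I = (α) J` for some `α ∈ K^×`.  Then there exist `y_𝔮 ∈ 𝔮`, `y_I ∈ I` and `t ∈ J`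
such that `y_𝔮` and `y_I` are units modulo `𝔪` and `α = y_𝔮 y_I / t`. -/
theorem stmt2 (K : Type*) [Field K] [NumberField K]
    (hdeg : Module.finrank ℚ K = 2)
    (himag : ∀ v : NumberField.InfinitePlace K, v.IsComplex)
    (𝔪 𝔮 I J : Ideal (𝓞 K))
    (h𝔮bot : 𝔮 ≠ ⊥) (h𝔮 : 𝔮.IsPrime) (hI : I ≠ ⊥) (hJ : J ≠ ⊥)
    (h𝔮𝔪 : IsCoprime 𝔮 𝔪) (hI𝔪 : IsCoprime I 𝔪) (hJ𝔪 : IsCoprime J 𝔪)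
    (α : K) (hα : α ≠ 0)
    (hfac : (𝔮 : FractionalIdeal (𝓞 K)⁰ K) * (I : FractionalIdeal (𝓞 K)⁰ K) =
      FractionalIdeal.spanSingleton (𝓞 K)⁰ α * (J : FractionalIdeal (𝓞 K)⁰ K)) :
    ∃ y𝔮 yI t : 𝓞 K, y𝔮 ∈ 𝔮 ∧ yI ∈ I ∧ t ∈ J ∧ t ≠ 0 ∧
      IsUnit (Ideal.Quotient.mk 𝔪 y𝔮) ∧ IsUnit (Ideal.Quotient.mk 𝔪 yI) ∧
      α = algebraMap (𝓞 K) K (y𝔮 * yI) / algebraMap (𝓞 K) K t := by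
  obtain ⟨y𝔮, hy𝔮, hy𝔮0, hy𝔮u⟩ := exists_unit_elem h𝔮bot h𝔮𝔪
  obtain ⟨yI, hyI, hyI0, hyIu⟩ := exists_unit_elem hI hI𝔪
  have hmem : algebraMap (𝓞 K) K (y𝔮 * yI) ∈
      (𝔮 : FractionalIdeal (𝓞 K)⁰ K) * (I : FractionalIdeal (𝓞 K)⁰ K) := by
    rw [← coeIdeal_mul]
    exact mem_coeIdeal_of_mem _ (Ideal.mul_mem_mul hy𝔮 hyI)
  obtain ⟨zJ, hzJ, hzJeq⟩ := (eq_spanSingleton_mul.mp hfac).1 _ hmem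
  obtain ⟨t, ht, rfl⟩ := (mem_coeIdeal _).mp hzJ
  have halg : algebraMap (𝓞 K) K (y𝔮 * yI) ≠ 0 := by
    simpa using mul_ne_zero hy𝔮0 hyI0
  have ht0 : t ≠ 0 := by
    rintro rfl
    simp [hy𝔮0, hyI0] at hzJeq
  refine ⟨y𝔮, yI, t, hy𝔮, hyI, ht, ht0, hy𝔮u, hyIu, ?_⟩
  have htK : algebraMap (𝓞 K) K t ≠ 0 := by
    simpa using ht0
  rw [eq_div_iff htK]
  exact hzJeq
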